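/- arXiv:2510.19762 — 2 statements merged into one kernel-verified Lean document; each statement's English description precedes it below -/
import Mathlib

section
/- Define g : ℝ³ → ℝ by g(a, b, c) = |a| + |a − b| + |1/2 + a − c| + |b| + |b + c − 2| + |b + c|. Then g(a, b, c) ≥ 2 for all (a, b, c) ∈ ℝ³, and equality holds if and only if (a, b, c) = (0, 0, 1/2). In particular g has the unique global minimizer (0, 0, 1/2) with minimum value 2. -/
/-- The function
`g(a,b,c) = |a| + |a−b| + |1/2+a−c| + |b| + |b+c−2| + |b+c|` satisfies
`g ≥ 2` everywhere, with equality iff `(a,b,c) = (0,0,1/2)`; in particular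
`(0,0,1/2)` is the unique global minimizer, with minimum value `2`. -/
theorem stmt_11 :
    (∀ a b c : ℝ,
      2 ≤ |a| + |a - b| + |1 / 2 + a - c| + |b| + |b + c - 2| + |b + c|) ∧
    (∀ a b c : ℝ,
      (|a| + |a - b| + |1 / 2 + a - c| + |b| + |b + c - 2| + |b + c| = 2) ↔
        (a = 0 ∧ b = 0 ∧ c = 1 / 2)) := by
  have key : ∀ b c : ℝ, (2:ℝ) ≤ |b + c - 2| + |b + c| := by
    intro b c
    have := abs_sub (b + c) (b + c - 2)
    have h2 : |(2:ℝ)| = 2 := by norm_num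
    calc (2:ℝ) = |(b + c) - (b + c - 2)| := by rw [show (b+c) - (b+c-2) = 2 by ring, h2]
      _ ≤ |b + c - 2| + |b + c| := by
          have := abs_sub_abs_le_abs_sub (b+c) (b+c-2)
          have := abs_sub_le (b+c) 0 (b+c-2)
          simpa [add_comm] using abs_sub (b + c) (b + c - 2)
  constructor
  · intro a b c
    have h1 := abs_nonneg a
    have h2 := abs_nonneg (a - b)
    have h3 := abs_nonneg (1 / 2 + a - c)
    have h4 := abs_nonneg b
    have h5 := key b c
    linarith
  · intro a b c
    constructor
    · intro h
      have h1 := abs_nonneg a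
      have h2 := abs_nonneg (a - b)
      have h3 := abs_nonneg (1 / 2 + a - c)
      have h4 := abs_nonneg b
      have h5 := key b c
      have ha : |a| = 0 := le_antisymm (by linarith) h1
      have hab : |a - b| = 0 := le_antisymm (by linarith) h2
      have hc : |1 / 2 + a - c| = 0 := le_antisymm (by linarith) h3
      have hb : |b| = 0 := le_antisymm (by linarith) h4
      rw [abs_eq_zero] at ha hab hc hb
      exact ⟨ha, hb, by linarith⟩
    · rintro ⟨rfl, rfl, rfl⟩
      norm_num
end

section
/- Fix M ≥ 1, d ≥ 1, N₀ ∈ ℝ, and points x^(1), …, x^(N) ∈ ℝ^M each satisfying x₁^(k) + ⋯ + x_M^(k) = N₀. Let Φ be the N × σ real matrix whose columns are indexed by the multi-indices α ∈ ℕ^M with |α| ≤ d (so σ = C(M + d, d)) and whose entries are Φ_{k,α} = (x^(k))^α. Then the kernel of Φ (acting on coefficient vectors in ℝ^σ) has dimension at least C(M + d − 1, d − 1); equivalently, the rank of Φ is at most C(M + d, d) − C(M + d − 1, d − 1). -/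
open MvPolynomial

/-- Tuples of naturals with sum at most `D` correspond to tuples with one more slot
and sum exactly `D`. -/
def degEquiv (M D : ℕ) :
    {β : Fin M → ℕ // ∑ i, β i ≤ D} ≃ {γ : Fin (M + 1) → ℕ // ∑ i, γ i = D} where
  toFun β := ⟨Fin.cons (D - ∑ i, β.1 i) β.1, by
    rw [Fin.sum_univ_succ]
    simp only [Fin.cons_zero, Fin.cons_succ]
    have := β.2; omega⟩
  invFun γ := ⟨fun i => γ.1 i.succ, by
    have h := γ.2
    rw [Fin.sum_univ_succ] at h
    have e : ∑ i : Fin M, (fun i => γ.1 i.succ) i = ∑ i : Fin M, γ.1 i.succ := rfl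
    rw [e]
    omega⟩
  left_inv β := by
    ext i
    simp
  right_inv γ := by
    ext i
    refine Fin.cases ?_ (fun j => ?_) i
    · have h := γ.2
      rw [Fin.sum_univ_succ] at h
      simp only [Fin.cons_zero]
      have e : ∑ i : Fin M, (fun i => γ.1 i.succ) i = ∑ i : Fin M, γ.1 i.succ := rfl
      rw [e]
      omega
    · simp

noncomputable instance degFintype (M D : ℕ) : Fintype {β : Fin M → ℕ // ∑ i, β i ≤ D} :=
  Fintype.ofEquiv _ ((Sym.equivNatSumOfFintype (Fin (M + 1)) D).trans (degEquiv M D).symm)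

lemma degCard (M D : ℕ) :
    Fintype.card {β : Fin M → ℕ // ∑ i, β i ≤ D} = (M + D).choose D := by
  rw [← Fintype.card_congr
    ((Sym.equivNatSumOfFintype (Fin (M + 1)) D).trans (degEquiv M D).symm)]
  rw [Sym.card_sym_eq_choose]
  congr 1
  simp only [Fintype.card_fin]
  omega

set_option maxHeartbeats 1000000 in
/-- If the data points `x^(1), …, x^(N) ∈ ℝ^M` all lie on the
conservation hyperplane `x₁ + ⋯ + x_M = N₀`, and `Φ` is the `N × σ` design
matrix (with `σ = C(M + d, d)`) whose columns, indexed by an enumeration `idx`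
of the multi-indices of total degree at most `d`, are the monomial evaluations
`Φ_{k,a} = ∏ i, (x^(k))_i ^ (idx a)_i`, then the kernel of `Φ` has dimension at
least `C(M + d − 1, d − 1)`, equivalently the rank of `Φ` is at most
`C(M + d, d) − C(M + d − 1, d − 1)`. -/
theorem stmt_13 (M d N : ℕ) (hM : 1 ≤ M) (hd : 1 ≤ d) (N₀ : ℝ)
    (x : Fin N → Fin M → ℝ) (hx : ∀ k, ∑ i : Fin M, x k i = N₀)
    (idx : Fin ((M + d).choose d) → (Fin M → ℕ))
    (hidx_inj : Function.Injective idx)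
    (hidx_deg : ∀ a, ∑ i : Fin M, idx a i ≤ d)
    (hidx_surj : ∀ β : Fin M → ℕ, ∑ i : Fin M, β i ≤ d → ∃ a, idx a = β)
    (Φ : Matrix (Fin N) (Fin ((M + d).choose d)) ℝ)
    (hΦ : ∀ k a, Φ k a = ∏ i : Fin M, x k i ^ idx a i) :
    (M + d - 1).choose (d - 1) ≤ Module.finrank ℝ (LinearMap.ker Φ.mulVecLin) ∧
    Φ.rank ≤ (M + d).choose d - (M + d - 1).choose (d - 1) := by
  classical
  set c := (M + d - 1).choose (d - 1) with hc
  -- The index type for low-degree multi-indices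
  let S := {β : Fin M → ℕ // ∑ i, β i ≤ d - 1}
  have hcardS : Fintype.card S = c := by
    have h2 : M + (d - 1) = M + d - 1 := by omega
    rw [hc, ← h2]
    exact degCard M (d - 1)
  -- conversion functions ↦ finsupp
  let F : (Fin M → ℕ) ≃ (Fin M →₀ ℕ) := Finsupp.equivFunOnFinite.symm
  have hFapp : ∀ (β : Fin M → ℕ) (i : Fin M), F β i = β i := by
    intro β i
    simp [F]
  have hFsum : ∀ β : Fin M → ℕ, (F β).sum (fun _ n => n) = ∑ i, β i := by
    intro β
    rw [Finsupp.sum_fintype _ _ (fun _ => rfl)]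
    rfl
  -- the conservation polynomial
  let L : MvPolynomial (Fin M) ℝ := (∑ i : Fin M, X i) - C N₀
  have hLdeg : L.totalDegree ≤ 1 := by
    refine (totalDegree_sub _ _).trans (max_le ?_ ?_)
    · exact totalDegree_finsetSum_le fun i _ => (totalDegree_X i).le
    · simp [totalDegree_C]
  have hMR : (M : ℝ) ≠ 0 := Nat.cast_ne_zero.mpr (by omega)
  have hLne : L ≠ 0 := by
    intro h
    have h2 := congrArg (eval (fun _ : Fin M => (N₀ + 1) / M)) h
    rw [map_sub, map_sum] at h2
    simp only [eval_X, eval_C, Finset.sum_const, Finset.card_univ, Fintype.card_fin,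
      nsmul_eq_mul, map_zero] at h2
    rw [mul_div_cancel₀ _ hMR] at h2
    linarith
  have hLeval : ∀ k, eval (x k) L = 0 := by
    intro k
    simp only [L, map_sub, map_sum, eval_X, eval_C, hx k, sub_self]
  -- the polynomial built from a coefficient function
  let A : (S → ℝ) → MvPolynomial (Fin M) ℝ :=
    fun f => ∑ s : S, monomial (F s.1) (f s)
  have hAdeg : ∀ f, (A f).totalDegree ≤ d - 1 := by
    intro f
    refine totalDegree_finsetSum_le fun s _ => ?_
    refine (totalDegree_monomial_le _ _).trans ?_
    show ((F s.1).sum fun _ n => n) ≤ d - 1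
    rw [hFsum]
    exact s.2
  have hQdeg : ∀ f, (A f * L).totalDegree ≤ d := by
    intro f
    refine (totalDegree_mul _ _).trans ?_
    have := hAdeg f
    omega
  -- the linear map into coefficient space
  let T : (S → ℝ) →ₗ[ℝ] (Fin ((M + d).choose d) → ℝ) :=
    { toFun := fun f b => coeff (F (idx b)) (A f * L)
      map_add' := by
        intro f g
        funext b
        have hA : A (f + g) = A f + A g := by
          simp only [A, Pi.add_apply]
          rw [← Finset.sum_add_distrib]
          exact Finset.sum_congr rfl fun s _ => by rw [map_add]
        simp only [hA, add_mul, coeff_add, Pi.add_apply]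
      map_smul' := by
        intro r f
        funext b
        have hA : A (r • f) = r • A f := by
          simp only [A, Pi.smul_apply, Finset.smul_sum, smul_monomial]
        simp only [hA, smul_mul_assoc, RingHom.id_apply, Pi.smul_apply, coeff_smul,
          smul_eq_mul] }
  -- support of A f * L is covered by idx
  have hsupp : ∀ (f : S → ℝ) (m : Fin M →₀ ℕ), m ∈ (A f * L).support →
      ∃ b, F (idx b) = m := by
    intro f m hm
    have hdeg : (∑ i, (F.symm m) i) ≤ d := by
      have h1 := le_totalDegree hm
      have h2 := hQdeg f
      have h3 : (∑ i, (F.symm m) i) = m.sum fun _ n => n := by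
        rw [← hFsum (F.symm m), Equiv.apply_symm_apply]
      omega
    obtain ⟨b, hb⟩ := hidx_surj _ hdeg
    exact ⟨b, by rw [hb, Equiv.apply_symm_apply]⟩
  -- T lands in the kernel of Φ
  have hker : ∀ f, T f ∈ LinearMap.ker Φ.mulVecLin := by
    intro f
    rw [LinearMap.mem_ker]
    funext k
    show Φ.mulVecLin (T f) k = 0
    have hinj : ∀ b ∈ Finset.univ, ∀ b' ∈ (Finset.univ : Finset (Fin ((M + d).choose d))),
        F (idx b) = F (idx b') → b = b' := fun b _ b' _ h => hidx_inj (F.injective h)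
    have hsub : (A f * L).support ⊆ Finset.univ.image (fun b => F (idx b)) := by
      intro m hm
      obtain ⟨b, hb⟩ := hsupp f m hm
      exact Finset.mem_image.mpr ⟨b, Finset.mem_univ b, hb⟩
    have hzero : ∀ m ∈ Finset.univ.image (fun b => F (idx b)), m ∉ (A f * L).support →
        coeff m (A f * L) * ∏ i, x k i ^ m i = 0 := fun m _ hm => by
      rw [MvPolynomial.notMem_support_iff.mp hm, zero_mul]
    calc Φ.mulVecLin (T f) k
        = ∑ b, (fun m => coeff m (A f * L) * ∏ i, x k i ^ m i) (F (idx b)) := by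
          simp only [Matrix.mulVecLin_apply, Matrix.mulVec, dotProduct, hΦ, T,
            LinearMap.coe_mk, AddHom.coe_mk, hFapp]
          exact Finset.sum_congr rfl fun b _ => mul_comm _ _
      _ = ∑ m ∈ Finset.univ.image (fun b => F (idx b)),
            coeff m (A f * L) * ∏ i, x k i ^ m i :=
            (Finset.sum_image (f := fun m => coeff m (A f * L) * ∏ i, x k i ^ m i) hinj).symm
      _ = ∑ m ∈ (A f * L).support,
            coeff m (A f * L) * ∏ i, x k i ^ m i := (Finset.sum_subset hsub hzero).symm
      _ = eval (x k) (A f * L) := (eval_eq' _ _).symm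
      _ = 0 := by rw [map_mul, hLeval, mul_zero]
  -- T is injective
  have hTinj : Function.Injective T := by
    rw [← LinearMap.ker_eq_bot, LinearMap.ker_eq_bot']
    intro f hf
    have hQ : A f * L = 0 := by
      by_contra hne
      obtain ⟨m, hm⟩ := MvPolynomial.ne_zero_iff.mp hne
      have hmm : m ∈ (A f * L).support := MvPolynomial.mem_support_iff.mpr hm
      obtain ⟨b, hb⟩ := hsupp f m hmm
      have := congrFun hf b
      simp only [T, LinearMap.coe_mk, AddHom.coe_mk, Pi.zero_apply, hb] at this
      exact hm this
    have hA0 : A f = 0 := by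
      rcases mul_eq_zero.mp hQ with h | h
      · exact h
      · exact absurd h hLne
    funext s
    have h1 := congrArg (coeff (F s.1)) hA0
    rw [coeff_zero] at h1
    simp only [A, coeff_sum, coeff_monomial] at h1
    rw [Finset.sum_eq_single s (fun s' _ hs' => by
        rw [if_neg]
        intro hcontra
        exact hs' (Subtype.ext (F.injective hcontra)))
      (fun hs => absurd (Finset.mem_univ s) hs)] at h1
    rw [if_pos rfl] at h1
    exact h1
  -- restrict to the kernel
  let T' : (S → ℝ) →ₗ[ℝ] LinearMap.ker Φ.mulVecLin := T.codRestrict _ hker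
  have hT'inj : Function.Injective T' := by
    intro a b h
    exact hTinj (congrArg Subtype.val h)
  have h1 : c ≤ Module.finrank ℝ (LinearMap.ker Φ.mulVecLin) := by
    have := LinearMap.finrank_le_finrank_of_injective hT'inj
    rwa [Module.finrank_fintype_fun_eq_card, hcardS] at this
  refine ⟨h1, ?_⟩
  have h2 : Φ.rank + Module.finrank ℝ (LinearMap.ker Φ.mulVecLin) = (M + d).choose d := by
    rw [Matrix.rank, LinearMap.finrank_range_add_finrank_ker,
      Module.finrank_fintype_fun_eq_card, Fintype.card_fin]
  omega
end
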